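/- Let n ≥ 1, a,b ∈ ℤ with gcd(a,b,n)=1, Λ = {(u,v) ∈ ℤ² : au+bv ≡ 0 (mod n)}, and d = gcd(b−a,n). For 0 ≤ i ≤ d, the point (n − i·n/d, i·n/d) is visible in Λ if and only if the residue class a(d−i) + bi has order n/d in ℤ/nℤ, i.e., gcd(a(d−i)+bi, n) = d. -/

import Mathlib

/-- A nonzero point `v` of `Λ` is visible in `Λ` if `(1/k) • v ∉ Λ` for all `k ≥ 2`. -/
def IsVisibleInSet (Λ : Set (ℤ × ℤ)) (v : ℤ × ℤ) : Prop :=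
  ∀ k : ℕ, 2 ≤ k → ∀ w ∈ Λ, (k : ℤ) • w ≠ v

/-- With `Λ = {(u,v) : au + bv ≡ 0 (mod n)}` and `d = gcd(b−a,n)`, the point
`(n − i·n/d, i·n/d)` (for `0 ≤ i ≤ d`) is visible in `Λ` iff the residue class
`a(d−i) + bi` has order `n/d` in `ℤ/nℤ`, i.e. `gcd(a(d−i)+bi, n) = d`. -/
theorem visible_iff_order (n : ℕ) (hn : 1 ≤ n) (a b : ℤ)
    (h : Int.gcd (Int.gcd a b) n = 1) (d : ℕ) (hd : d = Int.gcd (b - a) n)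
    (i : ℕ) (hi : i ≤ d) :
    IsVisibleInSet {p : ℤ × ℤ | (n : ℤ) ∣ a * p.1 + b * p.2}
        ((n : ℤ) - (i : ℤ) * ((n / d : ℕ) : ℤ), (i : ℤ) * ((n / d : ℕ) : ℤ)) ↔
      Int.gcd (a * ((d - i : ℕ) : ℤ) + b * (i : ℤ)) n = d := by
  have hn0 : (n : ℤ) ≠ 0 := by exact_mod_cast Nat.one_le_iff_ne_zero.mp hn
  have hd0 : 0 < d := by
    rw [hd, Int.gcd_pos_iff]
    exact Or.inr hn0
  have hdvd : d ∣ n := by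
    have : (d : ℤ) ∣ (n : ℤ) := by rw [hd]; exact Int.gcd_dvd_right _ _
    exact_mod_cast this
  set m : ℕ := n / d with hm_def
  have hm : n = d * m := (Nat.mul_div_cancel' hdvd).symm
  have hm0 : m ≠ 0 := by
    intro h0
    rw [h0, mul_zero] at hm
    exact hn0 (by exact_mod_cast hm)
  have he : (d : ℤ) ∣ (b - a) := by rw [hd]; exact Int.gcd_dvd_left _ _
  set e : ℤ := (b - a) / d with he_def
  have he2 : b - a = d * e := (Int.mul_ediv_cancel' he).symm
  set c' : ℤ := a + e * i with hc'_def
  have hcast : ((d - i : ℕ) : ℤ) = (d : ℤ) - i := by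
    push_cast [hi]; ring
  have hc : a * ((d - i : ℕ) : ℤ) + b * i = d * c' := by
    rw [hcast, hc'_def]
    linear_combination (i : ℤ) * he2
  have hnZ : (n : ℤ) = (d : ℤ) * m := by exact_mod_cast hm
  -- rewrite RHS
  have hrhs : Int.gcd (a * ((d - i : ℕ) : ℤ) + b * i) n = d ↔ Int.gcd c' m = 1 := by
    rw [hc, hnZ, Int.gcd_mul_left]
    simp only [Int.natAbs_natCast]
    constructor
    · intro hh
      exact Nat.eq_of_mul_eq_mul_left hd0 (by rw [hh, mul_one])
    · intro hh; rw [hh, mul_one]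
  rw [hrhs]
  -- rewrite the point
  have hp1 : (n : ℤ) - (i : ℤ) * (m : ℤ) = ((d : ℤ) - i) * m := by
    rw [hnZ]; ring
  constructor
  · -- visible → gcd = 1
    intro hv
    by_contra hne
    set t : ℕ := Int.gcd c' m with ht_def
    have htm : t ∣ m := by
      have : (t : ℤ) ∣ (m : ℤ) := Int.gcd_dvd_right _ _
      exact_mod_cast this
    have htc : (t : ℤ) ∣ c' := Int.gcd_dvd_left _ _
    have ht0 : t ≠ 0 := by
      intro h0
      rw [ht_def] at h0
      have := Int.gcd_eq_zero_iff.mp h0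
      exact hm0 (by exact_mod_cast this.2)
    have ht2 : 2 ≤ t := by omega
    obtain ⟨c'', hc''⟩ := htc
    have hmt : m = t * (m / t) := (Nat.mul_div_cancel' htm).symm
    have hw : ((((m / t : ℕ) : ℤ) * ((d : ℤ) - i), ((m / t : ℕ) : ℤ) * i) ∈
        {p : ℤ × ℤ | (n : ℤ) ∣ a * p.1 + b * p.2}) := by
      simp only [Set.mem_setOf_eq]
      refine ⟨c'', ?_⟩
      have hmZ : (m : ℤ) = (t : ℤ) * ((m / t : ℕ) : ℤ) := by exact_mod_cast hmt
      have : a * (((m / t : ℕ) : ℤ) * ((d : ℤ) - i)) + b * (((m / t : ℕ) : ℤ) * i)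
          = ((m / t : ℕ) : ℤ) * (a * ((d : ℤ) - i) + b * i) := by ring
      rw [this]
      have h2 : a * ((d : ℤ) - i) + b * i = (d : ℤ) * c' := by
        rw [← hcast]; exact hc
      rw [h2, hc'', hnZ, hmZ]
      ring
    have := hv t ht2 _ hw
    apply this
    have hmZ : (m : ℤ) = (t : ℤ) * ((m / t : ℕ) : ℤ) := by exact_mod_cast hmt
    ext
    · simp only [Prod.smul_fst, smul_eq_mul]
      rw [hp1, hmZ]; ring
    · simp only [Prod.smul_snd, smul_eq_mul]
      rw [hmZ]; ring
  · -- gcd = 1 → visible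
    intro hg k hk w hw heq
    simp only [Set.mem_setOf_eq] at hw
    have h1 : (k : ℤ) * w.1 = ((d : ℤ) - i) * m := by
      have := congrArg Prod.fst heq
      simpa [hp1] using this
    have h2 : (k : ℤ) * w.2 = (i : ℤ) * m := by
      have := congrArg Prod.snd heq
      simpa using this
    -- k ∣ c'
    obtain ⟨z, hz⟩ := hw
    have key : (n : ℤ) * c' = (n : ℤ) * ((k : ℤ) * z) := by
      have : (a * w.1 + b * w.2) * k = (n : ℤ) * c' := by
        have expand : (a * w.1 + b * w.2) * k = a * ((k:ℤ) * w.1) + b * ((k:ℤ) * w.2) := by ring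
        rw [expand, h1, h2]
        have h3 : a * (((d : ℤ) - i) * m) + b * ((i : ℤ) * m)
            = (a * ((d : ℤ) - i) + b * i) * m := by ring
        rw [h3, ← hcast, hc, hnZ]; ring
      rw [← this, hz]; ring
    have hkc' : (k : ℤ) ∣ c' := ⟨z, mul_left_cancel₀ hn0 key⟩
    -- k ∣ n
    have hkn : (k : ℤ) ∣ (n : ℤ) := by
      refine ⟨w.1 + w.2, ?_⟩
      have : (n : ℤ) = (k : ℤ) * w.1 + (k : ℤ) * w.2 := by
        rw [h1, h2, hnZ]; ring
      linarith [this]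
    obtain ⟨p, hp, hpk⟩ := Nat.exists_prime_and_dvd (by omega : k ≠ 1)
    have hpkZ : (p : ℤ) ∣ (k : ℤ) := by exact_mod_cast hpk
    have hpc' : (p : ℤ) ∣ c' := hpkZ.trans hkc'
    have hpn : p ∣ n := by
      have : (p : ℤ) ∣ (n : ℤ) := hpkZ.trans hkn
      exact_mod_cast this
    by_cases hpm : (p : ℤ) ∣ (m : ℤ)
    · have : (p : ℤ) ∣ (Int.gcd c' m : ℤ) := Int.dvd_coe_gcd hpc' hpm
      rw [hg] at this
      have : p ∣ 1 := by exact_mod_cast this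
      exact Nat.Prime.one_lt hp |>.ne' (Nat.dvd_one.mp this)
    · -- p ∣ d and p ∣ i
      have hpd : p ∣ d := by
        rw [hm] at hpn
        rcases (Nat.Prime.dvd_mul hp).mp hpn with h' | h'
        · exact h'
        · exact absurd (by exact_mod_cast h' : (p : ℤ) ∣ (m : ℤ)) hpm
      have hpi : (p : ℤ) ∣ (i : ℤ) := by
        have him : (p : ℤ) ∣ (i : ℤ) * m := hpkZ.trans ⟨w.2, h2.symm⟩
        rcases (Int.Prime.dvd_mul' hp him) with h' | h'
        · exact h'
        · exact absurd h' hpm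
      have hpa : (p : ℤ) ∣ a := by
        have : a = c' - e * i := by rw [hc'_def]; ring
        rw [this]
        exact dvd_sub hpc' (Dvd.dvd.mul_left hpi e)
      have hpb : (p : ℤ) ∣ b := by
        have hpd' : (p : ℤ) ∣ (d : ℤ) := by exact_mod_cast hpd
        have : (p : ℤ) ∣ b - a := hpd'.trans he
        have := dvd_add this hpa
        simpa using this
      have h1' : (p : ℤ) ∣ (Int.gcd a b : ℤ) := Int.dvd_coe_gcd hpa hpb
      have h2' : (p : ℤ) ∣ (Int.gcd (Int.gcd a b) n : ℤ) :=
        Int.dvd_coe_gcd h1' (by exact_mod_cast hpn)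
      rw [h] at h2'
      have : p ∣ 1 := by exact_mod_cast h2'
      exact Nat.Prime.one_lt hp |>.ne' (Nat.dvd_one.mp this)
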